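/- For the ladder graph P_1[2] × P_2[n+1] with n ≥ 2, label the two copies of the path (with edge set {v_i v_{i+2} : 1 ≤ i ≤ n-1} ∪ {v_n v_{n+1}}) with odd labels 1,3,...,2n-1 on the first copy and even labels 2,4,...,2n on the second copy (in the same edge order), and label the rung edges ((u_1,v_i),(u_2,v_i)) with 2n+i for i = 1,...,n+1. Then the 2(n+1) vertex sums satisfy f⁺(u_1,v_1) < f⁺(u_2,v_1) < f⁺(u_1,v_2) < f⁺(u_2,v_2) < ... < f⁺(u_1,v_{n+1}) < f⁺(u_2,v_{n+1}), so the labeling is antimagic. -/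

import Mathlib

open Finset SimpleGraph

set_option maxHeartbeats 1000000

open scoped Classical in
/-- The sum of the labels of all edges incident to `v`. -/
noncomputable def vertexSum {V : Type*} [Fintype V] (G : SimpleGraph V)
    (f : Sym2 V → ℕ) (v : V) : ℕ :=
  ∑ w ∈ Finset.univ.filter (fun w => G.Adj v w), f s(v, w)

/-- The path on vertices `v_1, …, v_{n+1}` (0-based: `0, …, n`) with edge set
`{v_i v_{i+2} : 1 ≤ i ≤ n-1} ∪ {v_n v_{n+1}}`. -/
def reindexedPath (n : ℕ) : SimpleGraph (Fin (n + 1)) :=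
  SimpleGraph.fromRel (fun a b => (a : ℕ) + 2 = (b : ℕ) ∨ ((a : ℕ) = n - 1 ∧ (b : ℕ) = n))

/-- The ladder graph `P[2] □ P[n+1]`, with each path copy carrying the re-indexed
edge set `{v_i v_{i+2} : 1 ≤ i ≤ n-1} ∪ {v_n v_{n+1}}`. -/
def ladder (n : ℕ) : SimpleGraph (Fin 2 × Fin (n + 1)) :=
  pathGraph 2 □ reindexedPath n

lemma ladder_adj (n : ℕ) (u w : Fin 2) (i j : Fin (n+1)) :
    (ladder n).Adj (u,i) (w,j) ↔
      (u ≠ w ∧ i = j) ∨ (u = w ∧ (i:ℕ) ≠ (j:ℕ) ∧ ((i:ℕ)+2=(j:ℕ) ∨ (j:ℕ)+2=(i:ℕ) ∨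
        ((i:ℕ)=n-1 ∧ (j:ℕ)=n) ∨ ((j:ℕ)=n-1 ∧ (i:ℕ)=n))) := by
  have hp : ∀ a b : Fin 2, (pathGraph 2).Adj a b ↔ a ≠ b := by
    intro a b; rw [SimpleGraph.pathGraph_adj]; omega
  simp only [ladder, SimpleGraph.boxProd_adj, hp, reindexedPath, SimpleGraph.fromRel_adj,
    ne_eq, Fin.ext_iff]
  tauto

open scoped Classical in
lemma vertexSum_eq (n : ℕ) (f : Sym2 (Fin 2 × Fin (n+1)) → ℕ) (u : Fin 2) (i : Fin (n+1)) :
    vertexSum (ladder n) f (u, i) =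
      ∑ w ∈ Finset.univ.filter (fun w => (ladder n).Adj (u,i) w), f s((u,i), w) := rfl

section nbhd
variable {n : ℕ}

open scoped Classical in
lemma nbhdA (hn : 2 ≤ n) (iv : ℕ) (h0 : iv = 0) (hlt : iv < n + 1) (u w : Fin 2) (huw : u ≠ w) :
    Finset.univ.filter (fun x => (ladder n).Adj (u, ⟨iv, hlt⟩) x)
      = {(w, ⟨iv, hlt⟩), (u, ⟨2, by omega⟩)} := by
  rw [Ne, Fin.ext_iff] at huw
  ext ⟨w2, j⟩
  simp only [Finset.mem_filter, Finset.mem_univ, true_and, ladder_adj, Finset.mem_insert,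
    Finset.mem_singleton, Prod.mk.injEq, Fin.ext_iff, Fin.val_mk, ne_eq, and_true, true_and,
    and_false, false_and]
  fin_omega

open scoped Classical in
lemma nbhdB (hn : 3 ≤ n) (iv : ℕ) (h1 : iv = 1) (hlt : iv < n + 1) (u w : Fin 2) (huw : u ≠ w) :
    Finset.univ.filter (fun x => (ladder n).Adj (u, ⟨iv, hlt⟩) x)
      = {(w, ⟨iv, hlt⟩), (u, ⟨3, by omega⟩)} := by
  rw [Ne, Fin.ext_iff] at huw
  ext ⟨w2, j⟩
  simp only [Finset.mem_filter, Finset.mem_univ, true_and, ladder_adj, Finset.mem_insert,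
    Finset.mem_singleton, Prod.mk.injEq, Fin.ext_iff, Fin.val_mk, ne_eq, and_true, true_and,
    and_false, false_and]
  fin_omega

open scoped Classical in
lemma nbhdB2 (hn : n = 2) (iv : ℕ) (h1 : iv = 1) (hlt : iv < n + 1) (u w : Fin 2) (huw : u ≠ w) :
    Finset.univ.filter (fun x => (ladder n).Adj (u, ⟨iv, hlt⟩) x)
      = {(w, ⟨iv, hlt⟩), (u, ⟨2, by omega⟩)} := by
  rw [Ne, Fin.ext_iff] at huw
  ext ⟨w2, j⟩
  simp only [Finset.mem_filter, Finset.mem_univ, true_and, ladder_adj, Finset.mem_insert,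
    Finset.mem_singleton, Prod.mk.injEq, Fin.ext_iff, Fin.val_mk, ne_eq, and_true, true_and,
    and_false, false_and]
  fin_omega

open scoped Classical in
lemma nbhdC (hn : 2 ≤ n) (iv : ℕ) (h1 : 2 ≤ iv) (h2 : iv + 2 ≤ n) (hlt : iv < n + 1)
    (u w : Fin 2) (huw : u ≠ w) :
    Finset.univ.filter (fun x => (ladder n).Adj (u, ⟨iv, hlt⟩) x)
      = {(w, ⟨iv, hlt⟩), (u, ⟨iv - 2, by omega⟩), (u, ⟨iv + 2, by omega⟩)} := by
  rw [Ne, Fin.ext_iff] at huw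
  ext ⟨w2, j⟩
  simp only [Finset.mem_filter, Finset.mem_univ, true_and, ladder_adj, Finset.mem_insert,
    Finset.mem_singleton, Prod.mk.injEq, Fin.ext_iff, Fin.val_mk, ne_eq, and_true, true_and,
    and_false, false_and]
  fin_omega

open scoped Classical in
lemma nbhdD (hn : 3 ≤ n) (iv : ℕ) (hD : iv = n - 1) (hlt : iv < n + 1) (u w : Fin 2)
    (huw : u ≠ w) :
    Finset.univ.filter (fun x => (ladder n).Adj (u, ⟨iv, hlt⟩) x)
      = {(w, ⟨iv, hlt⟩), (u, ⟨n - 3, by omega⟩), (u, ⟨n, by omega⟩)} := by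
  rw [Ne, Fin.ext_iff] at huw
  ext ⟨w2, j⟩
  simp only [Finset.mem_filter, Finset.mem_univ, true_and, ladder_adj, Finset.mem_insert,
    Finset.mem_singleton, Prod.mk.injEq, Fin.ext_iff, Fin.val_mk, ne_eq, and_true, true_and,
    and_false, false_and]
  fin_omega

open scoped Classical in
lemma nbhdE (hn : 2 ≤ n) (iv : ℕ) (hE : iv = n) (hlt : iv < n + 1) (u w : Fin 2) (huw : u ≠ w) :
    Finset.univ.filter (fun x => (ladder n).Adj (u, ⟨iv, hlt⟩) x)
      = {(w, ⟨iv, hlt⟩), (u, ⟨n - 2, by omega⟩), (u, ⟨n - 1, by omega⟩)} := by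
  rw [Ne, Fin.ext_iff] at huw
  ext ⟨w2, j⟩
  simp only [Finset.mem_filter, Finset.mem_univ, true_and, ladder_adj, Finset.mem_insert,
    Finset.mem_singleton, Prod.mk.injEq, Fin.ext_iff, Fin.val_mk, ne_eq, and_true, true_and,
    and_false, false_and]
  fin_omega

end nbhd

lemma ladder_val (n : ℕ) (hn : 2 ≤ n)
    (f : Sym2 (Fin 2 × Fin (n + 1)) → ℕ)
    (hf1 : ∀ i : ℕ, ∀ _h1 : 1 ≤ i, ∀ _h2 : i ≤ n - 1,
      f s(((0 : Fin 2), (⟨i - 1, by have _ := f; omega⟩ : Fin (n + 1))),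
          ((0 : Fin 2), (⟨i + 1, by have _ := f; omega⟩ : Fin (n + 1)))) = 2 * i - 1)
    (hf2 : f s(((0 : Fin 2), (⟨n - 1, by have _ := f; omega⟩ : Fin (n + 1))),
          ((0 : Fin 2), (⟨n, by have _ := f; omega⟩ : Fin (n + 1)))) = 2 * n - 1)
    (hf3 : ∀ i : ℕ, ∀ _h1 : 1 ≤ i, ∀ _h2 : i ≤ n - 1,
      f s(((1 : Fin 2), (⟨i - 1, by have _ := f; omega⟩ : Fin (n + 1))),
          ((1 : Fin 2), (⟨i + 1, by have _ := f; omega⟩ : Fin (n + 1)))) = 2 * i)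
    (hf4 : f s(((1 : Fin 2), (⟨n - 1, by have _ := f; omega⟩ : Fin (n + 1))),
          ((1 : Fin 2), (⟨n, by have _ := f; omega⟩ : Fin (n + 1)))) = 2 * n)
    (hf5 : ∀ i : ℕ, ∀ _h1 : 1 ≤ i, ∀ _h2 : i ≤ n + 1,
      f s(((0 : Fin 2), (⟨i - 1, by have _ := f; omega⟩ : Fin (n + 1))),
          ((1 : Fin 2), (⟨i - 1, by have _ := f; omega⟩ : Fin (n + 1)))) = 2 * n + i)
    (iv : ℕ) (hlt : iv < n + 1) (u : Fin 2) :
    vertexSum (ladder n) f (u, ⟨iv, hlt⟩) =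
      (if iv = 0 then 2*n + 2 + (u:ℕ) else if iv = 1 then 2*n + 5 + (u:ℕ)
       else if iv = n then 7*n - 3 + 2*(u:ℕ) else 2*n + 5*iv - 1 + 2*(u:ℕ)) := by
  have e10 : ∀ (k : ℕ), k + 2 ≤ n → ∀ a b : Fin (n+1), (a:ℕ) = k → (b:ℕ) = k+2 →
      f s(((0 : Fin 2), a), ((0 : Fin 2), b)) = 2*k+1 := by
    intro k hk a b ha hb
    subst ha
    rw [show b = ⟨(a:ℕ)+2, by omega⟩ from Fin.ext hb]
    have h := hf1 ((a:ℕ)+1) (by omega) (by omega)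
    exact h.trans (by omega)
  have e11 : ∀ (k : ℕ), k + 2 ≤ n → ∀ a b : Fin (n+1), (a:ℕ) = k → (b:ℕ) = k+2 →
      f s(((1 : Fin 2), a), ((1 : Fin 2), b)) = 2*k+2 := by
    intro k hk a b ha hb
    subst ha
    rw [show b = ⟨(a:ℕ)+2, by omega⟩ from Fin.ext hb]
    have h := hf3 ((a:ℕ)+1) (by omega) (by omega)
    exact h.trans (by omega)
  have e10s : ∀ (k : ℕ), k + 2 ≤ n → ∀ a b : Fin (n+1), (a:ℕ) = k → (b:ℕ) = k+2 →
      f s(((0 : Fin 2), b), ((0 : Fin 2), a)) = 2*k+1 := by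
    intro k hk a b ha hb
    rw [Sym2.eq_swap]
    exact e10 k hk a b ha hb
  have e11s : ∀ (k : ℕ), k + 2 ≤ n → ∀ a b : Fin (n+1), (a:ℕ) = k → (b:ℕ) = k+2 →
      f s(((1 : Fin 2), b), ((1 : Fin 2), a)) = 2*k+2 := by
    intro k hk a b ha hb
    rw [Sym2.eq_swap]
    exact e11 k hk a b ha hb
  have e20 : ∀ a b : Fin (n+1), (a:ℕ) = n-1 → (b:ℕ) = n →
      f s(((0 : Fin 2), a), ((0 : Fin 2), b)) = 2*n-1 := by
    intro a b ha hb
    rw [show a = ⟨n-1, Nat.lt_succ_of_le (Nat.sub_le n 1)⟩ from Fin.ext ha,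
      show b = ⟨n, Nat.lt_succ_self n⟩ from Fin.ext hb]
    exact hf2
  have e21 : ∀ a b : Fin (n+1), (a:ℕ) = n-1 → (b:ℕ) = n →
      f s(((1 : Fin 2), a), ((1 : Fin 2), b)) = 2*n := by
    intro a b ha hb
    rw [show a = ⟨n-1, Nat.lt_succ_of_le (Nat.sub_le n 1)⟩ from Fin.ext ha,
      show b = ⟨n, Nat.lt_succ_self n⟩ from Fin.ext hb]
    exact hf4
  have e20s : ∀ a b : Fin (n+1), (a:ℕ) = n-1 → (b:ℕ) = n →
      f s(((0 : Fin 2), b), ((0 : Fin 2), a)) = 2*n-1 := by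
    intro a b ha hb; rw [Sym2.eq_swap]; exact e20 a b ha hb
  have e21s : ∀ a b : Fin (n+1), (a:ℕ) = n-1 → (b:ℕ) = n →
      f s(((1 : Fin 2), b), ((1 : Fin 2), a)) = 2*n := by
    intro a b ha hb; rw [Sym2.eq_swap]; exact e21 a b ha hb
  have e3 : ∀ a b : Fin (n+1), (a:ℕ) = (b:ℕ) →
      f s(((0 : Fin 2), a), ((1 : Fin 2), b)) = 2*n+(a:ℕ)+1 := by
    intro a b hab
    rw [show b = ⟨(a:ℕ), a.isLt⟩ from Fin.ext hab.symm]
    have h := hf5 ((a:ℕ)+1) (by omega) (by omega)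
    exact h.trans (by omega)
  have e3s : ∀ a b : Fin (n+1), (a:ℕ) = (b:ℕ) →
      f s(((1 : Fin 2), a), ((0 : Fin 2), b)) = 2*n+(a:ℕ)+1 := by
    intro a b hab
    rw [Sym2.eq_swap, e3 b a hab.symm, hab]
  have hne : ∀ (c d : Fin 2) (x y : Fin (n+1)), c ≠ d → (c, x) ≠ (d, y) := by
    intro c d x y hcd h
    exact hcd (congrArg Prod.fst h)
  have hnm : ∀ (c d : Fin 2) (x y z : Fin (n+1)), c ≠ d →
      (c, x) ∉ ({(d, y), (d, z)} : Finset (Fin 2 × Fin (n+1))) := by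
    intro c d x y z hcd h
    rcases Finset.mem_insert.mp h with h | h
    · exact hne c d x y hcd h
    · exact hne c d x z hcd (Finset.mem_singleton.mp h)
  have hu2 := u.isLt
  by_cases h0 : iv = 0
  · rw [if_pos h0]
    rcases (by omega : (u:ℕ) = 0 ∨ (u:ℕ) = 1) with hu | hu
    · obtain rfl : u = 0 := Fin.ext (by simpa using hu)
      rw [vertexSum_eq, nbhdA hn iv h0 hlt 0 1 (by decide),
        Finset.sum_pair (hne _ _ _ _ (by decide)),
        e3 _ _ rfl, e10 0 hn ⟨iv, hlt⟩ ⟨2, by omega⟩ h0 rfl]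
      simp only [Fin.val_mk, Fin.val_zero]
      omega
    · obtain rfl : u = 1 := Fin.ext (by simpa using hu)
      rw [vertexSum_eq, nbhdA hn iv h0 hlt 1 0 (by decide),
        Finset.sum_pair (hne _ _ _ _ (by decide)),
        e3s _ _ rfl, e11 0 hn ⟨iv, hlt⟩ ⟨2, by omega⟩ h0 rfl]
      simp only [Fin.val_mk, Fin.val_one]
      omega
  rw [if_neg h0]
  by_cases h1 : iv = 1
  · rw [if_pos h1]
    by_cases hn2 : n = 2
    · rcases (by omega : (u:ℕ) = 0 ∨ (u:ℕ) = 1) with hu | hu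
      · obtain rfl : u = 0 := Fin.ext (by simpa using hu)
        rw [vertexSum_eq, nbhdB2 hn2 iv h1 hlt 0 1 (by decide),
          Finset.sum_pair (hne _ _ _ _ (by decide)),
          e3 _ _ rfl, e20 ⟨iv, hlt⟩ ⟨2, by omega⟩ (show iv = n - 1 by omega) (show (2:ℕ) = n by omega)]
        simp only [Fin.val_mk, Fin.val_zero]
        omega
      · obtain rfl : u = 1 := Fin.ext (by simpa using hu)
        rw [vertexSum_eq, nbhdB2 hn2 iv h1 hlt 1 0 (by decide),
          Finset.sum_pair (hne _ _ _ _ (by decide)),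
          e3s _ _ rfl, e21 ⟨iv, hlt⟩ ⟨2, by omega⟩ (show iv = n - 1 by omega) (show (2:ℕ) = n by omega)]
        simp only [Fin.val_mk, Fin.val_one]
        omega
    · have hn3 : 3 ≤ n := by omega
      rcases (by omega : (u:ℕ) = 0 ∨ (u:ℕ) = 1) with hu | hu
      · obtain rfl : u = 0 := Fin.ext (by simpa using hu)
        rw [vertexSum_eq, nbhdB hn3 iv h1 hlt 0 1 (by decide),
          Finset.sum_pair (hne _ _ _ _ (by decide)),
          e3 _ _ rfl, e10 1 (by omega) ⟨iv, hlt⟩ ⟨3, by omega⟩ h1 rfl]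
        simp only [Fin.val_mk, Fin.val_zero]
        omega
      · obtain rfl : u = 1 := Fin.ext (by simpa using hu)
        rw [vertexSum_eq, nbhdB hn3 iv h1 hlt 1 0 (by decide),
          Finset.sum_pair (hne _ _ _ _ (by decide)),
          e3s _ _ rfl, e11 1 (by omega) ⟨iv, hlt⟩ ⟨3, by omega⟩ h1 rfl]
        simp only [Fin.val_mk, Fin.val_one]
        omega
  rw [if_neg h1]
  by_cases hE : iv = n
  · rw [if_pos hE]
    rcases (by omega : (u:ℕ) = 0 ∨ (u:ℕ) = 1) with hu | hu
    · obtain rfl : u = 0 := Fin.ext (by simpa using hu)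
      rw [vertexSum_eq, nbhdE hn iv hE hlt 0 1 (by decide),
        Finset.sum_insert (hnm _ _ _ _ _ (by decide)), Finset.sum_pair
          (by simp only [ne_eq, Prod.mk.injEq, Fin.mk.injEq, eq_self_iff_true, true_and]; omega),
        e3 _ _ rfl,
        e10s (n-2) (by omega) ⟨n-2, by omega⟩ ⟨iv, hlt⟩ rfl (show iv = n-2+2 by omega),
        e20s ⟨n-1, by omega⟩ ⟨iv, hlt⟩ rfl hE]
      simp only [Fin.val_mk, Fin.val_zero]
      omega
    · obtain rfl : u = 1 := Fin.ext (by simpa using hu)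
      rw [vertexSum_eq, nbhdE hn iv hE hlt 1 0 (by decide),
        Finset.sum_insert (hnm _ _ _ _ _ (by decide)), Finset.sum_pair
          (by simp only [ne_eq, Prod.mk.injEq, Fin.mk.injEq, eq_self_iff_true, true_and]; omega),
        e3s _ _ rfl,
        e11s (n-2) (by omega) ⟨n-2, by omega⟩ ⟨iv, hlt⟩ rfl (show iv = n-2+2 by omega),
        e21s ⟨n-1, by omega⟩ ⟨iv, hlt⟩ rfl hE]
      simp only [Fin.val_mk, Fin.val_one]
      omega
  rw [if_neg hE]
  by_cases hD : iv = n - 1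
  · have hn3 : 3 ≤ n := by omega
    rcases (by omega : (u:ℕ) = 0 ∨ (u:ℕ) = 1) with hu | hu
    · obtain rfl : u = 0 := Fin.ext (by simpa using hu)
      rw [vertexSum_eq, nbhdD hn3 iv hD hlt 0 1 (by decide),
        Finset.sum_insert (hnm _ _ _ _ _ (by decide)), Finset.sum_pair
          (by simp only [ne_eq, Prod.mk.injEq, Fin.mk.injEq, eq_self_iff_true, true_and]; omega),
        e3 _ _ rfl,
        e10s (n-3) (by omega) ⟨n-3, by omega⟩ ⟨iv, hlt⟩ rfl (show iv = n-3+2 by omega),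
        e20 ⟨iv, hlt⟩ ⟨n, by omega⟩ hD rfl]
      simp only [Fin.val_mk, Fin.val_zero]
      omega
    · obtain rfl : u = 1 := Fin.ext (by simpa using hu)
      rw [vertexSum_eq, nbhdD hn3 iv hD hlt 1 0 (by decide),
        Finset.sum_insert (hnm _ _ _ _ _ (by decide)), Finset.sum_pair
          (by simp only [ne_eq, Prod.mk.injEq, Fin.mk.injEq, eq_self_iff_true, true_and]; omega),
        e3s _ _ rfl,
        e11s (n-3) (by omega) ⟨n-3, by omega⟩ ⟨iv, hlt⟩ rfl (show iv = n-3+2 by omega),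
        e21 ⟨iv, hlt⟩ ⟨n, by omega⟩ hD rfl]
      simp only [Fin.val_mk, Fin.val_one]
      omega
  · have h2 : 2 ≤ iv := by omega
    have h2' : iv + 2 ≤ n := by omega
    rcases (by omega : (u:ℕ) = 0 ∨ (u:ℕ) = 1) with hu | hu
    · obtain rfl : u = 0 := Fin.ext (by simpa using hu)
      rw [vertexSum_eq, nbhdC hn iv h2 h2' hlt 0 1 (by decide),
        Finset.sum_insert (hnm _ _ _ _ _ (by decide)), Finset.sum_pair
          (by simp only [ne_eq, Prod.mk.injEq, Fin.mk.injEq, eq_self_iff_true, true_and]; omega),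
        e3 _ _ rfl,
        e10s (iv-2) (by omega) ⟨iv-2, by omega⟩ ⟨iv, hlt⟩ rfl (show iv = iv-2+2 by omega),
        e10 iv (by omega) ⟨iv, hlt⟩ ⟨iv+2, by omega⟩ rfl rfl]
      simp only [Fin.val_mk, Fin.val_zero]
      omega
    · obtain rfl : u = 1 := Fin.ext (by simpa using hu)
      rw [vertexSum_eq, nbhdC hn iv h2 h2' hlt 1 0 (by decide),
        Finset.sum_insert (hnm _ _ _ _ _ (by decide)), Finset.sum_pair
          (by simp only [ne_eq, Prod.mk.injEq, Fin.mk.injEq, eq_self_iff_true, true_and]; omega),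
        e3s _ _ rfl,
        e11s (iv-2) (by omega) ⟨iv-2, by omega⟩ ⟨iv, hlt⟩ rfl (show iv = iv-2+2 by omega),
        e11 iv (by omega) ⟨iv, hlt⟩ ⟨iv+2, by omega⟩ rfl rfl]
      simp only [Fin.val_mk, Fin.val_one]
      omega

/-- For the ladder `P[2] □ P[n+1]` (`n ≥ 2`): label the first path copy with odd labels
`1, 3, …, 2n-1`, the second copy with even labels `2, 4, …, 2n` (same edge order),
and the rung `((u_1,v_i),(u_2,v_i))` with `2n + i`.  Then
`f⁺(u_1,v_1) < f⁺(u_2,v_1) < f⁺(u_1,v_2) < … < f⁺(u_1,v_{n+1}) < f⁺(u_2,v_{n+1})`,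
so the labeling is antimagic. -/
theorem ladder_labeling_antimagic (n : ℕ) (hn : 2 ≤ n)
    (f : Sym2 (Fin 2 × Fin (n + 1)) → ℕ)
    (hf1 : ∀ i : ℕ, ∀ _h1 : 1 ≤ i, ∀ _h2 : i ≤ n - 1,
      f s(((0 : Fin 2), (⟨i - 1, by omega⟩ : Fin (n + 1))),
          ((0 : Fin 2), (⟨i + 1, by omega⟩ : Fin (n + 1)))) = 2 * i - 1)
    (hf2 : f s(((0 : Fin 2), (⟨n - 1, by omega⟩ : Fin (n + 1))),
          ((0 : Fin 2), (⟨n, by omega⟩ : Fin (n + 1)))) = 2 * n - 1)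
    (hf3 : ∀ i : ℕ, ∀ _h1 : 1 ≤ i, ∀ _h2 : i ≤ n - 1,
      f s(((1 : Fin 2), (⟨i - 1, by omega⟩ : Fin (n + 1))),
          ((1 : Fin 2), (⟨i + 1, by omega⟩ : Fin (n + 1)))) = 2 * i)
    (hf4 : f s(((1 : Fin 2), (⟨n - 1, by omega⟩ : Fin (n + 1))),
          ((1 : Fin 2), (⟨n, by omega⟩ : Fin (n + 1)))) = 2 * n)
    (hf5 : ∀ i : ℕ, ∀ _h1 : 1 ≤ i, ∀ _h2 : i ≤ n + 1,
      f s(((0 : Fin 2), (⟨i - 1, by omega⟩ : Fin (n + 1))),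
          ((1 : Fin 2), (⟨i - 1, by omega⟩ : Fin (n + 1)))) = 2 * n + i) :
    (∀ i : Fin (n + 1), vertexSum (ladder n) f (0, i) < vertexSum (ladder n) f (1, i)) ∧
    (∀ i : ℕ, ∀ _h : i < n,
      vertexSum (ladder n) f (1, ⟨i, by omega⟩) <
        vertexSum (ladder n) f (0, ⟨i + 1, by omega⟩)) ∧
    Function.Injective (vertexSum (ladder n) f) := by
  refine ⟨?_, ?_, ?_⟩
  · intro i
    obtain ⟨iv, hlt⟩ := i
    rw [ladder_val n hn f hf1 hf2 hf3 hf4 hf5 iv hlt 0,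
        ladder_val n hn f hf1 hf2 hf3 hf4 hf5 iv hlt 1]
    simp only [Fin.val_zero, Fin.val_one]
    split_ifs <;> first | exact absurd ‹False› not_false | omega
  · intro i hi
    rw [ladder_val n hn f hf1 hf2 hf3 hf4 hf5 i (by omega) 1,
        ladder_val n hn f hf1 hf2 hf3 hf4 hf5 (i+1) (by omega) 0]
    simp only [Fin.val_zero, Fin.val_one]
    split_ifs <;> first | exact absurd ‹False› not_false | omega
  · intro a b hab
    obtain ⟨u, i⟩ := a
    obtain ⟨w, j⟩ := b
    obtain ⟨iv, hlti⟩ := i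
    obtain ⟨jv, hltj⟩ := j
    rw [ladder_val n hn f hf1 hf2 hf3 hf4 hf5 iv hlti u,
        ladder_val n hn f hf1 hf2 hf3 hf4 hf5 jv hltj w] at hab
    have hu := u.isLt
    have hw := w.isLt
    have hlti' := hlti
    have hltj' := hltj
    have key : (u:ℕ) = (w:ℕ) ∧ iv = jv := by
      split_ifs at hab <;> first | exact absurd ‹False› not_false | omega
    exact Prod.ext_iff.mpr ⟨Fin.ext key.1, Fin.ext key.2⟩
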